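/- Let $G$ be a countable abelian group and let $X = \{0,1\}^G$ with the shift action $(\sigma^g x)(h) = x(h+g)$. Let $A \subseteq G$ and suppose $A + F$ is thick for some finite $F \subseteq G$. Then the orbit closure of the indicator function $1_A$ in $X$ contains a point $x$ such that for every $g \in G$ there exists $h \in F$ with $x(g - h) = 1$; in particular the orbit closure contains a minimal subsystem other than the fixed point $\{x_0\}$, where $x_0$ is the constant $0$ function. -/

import Mathlib

open scoped Classical

/-- `R` is thick: every finite subset of `G` has a translate inside `R`. -/
def Thick {G : Type*} [AddCommGroup G] (R : Set G) : Prop :=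
  ∀ F : Finset G, ∃ g : G, ∀ f ∈ F, f + g ∈ R

/-- The boolean indicator function of a set. -/
noncomputable def indB {G : Type*} (A : Set G) : G → Bool :=
  fun h => if h ∈ A then true else false

/-- The shift action of `G` on `{0,1}^G`. -/
def shift {G : Type*} [AddCommGroup G] (g : G) (x : G → Bool) : G → Bool :=
  fun h => x (h + g)

lemma shift_cont {G : Type*} [AddCommGroup G] (g : G) :
    Continuous (shift g : (G → Bool) → (G → Bool)) :=
  continuous_pi fun h => continuous_apply (h + g)

lemma shift_shift {G : Type*} [AddCommGroup G] (g g' : G) (x : G → Bool) :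
    shift g (shift g' x) = shift (g' + g) x := by
  funext h; show x (h + g + g') = x (h + (g' + g)); congr 1; abel

lemma shift_neg_shift {G : Type*} [AddCommGroup G] (g : G) (x : G → Bool) :
    shift g (shift (-g) x) = x := by
  funext h; show x (h + g + -g) = x h; congr 1; abel

theorem stmt17 {G : Type*} [AddCommGroup G] [Countable G] (A : Set G) (F : Finset G)
    (hthick : Thick {x : G | ∃ a ∈ A, ∃ f ∈ F, x = a + f}) :
    (∃ x ∈ closure (Set.range fun g : G => shift g (indB A)),
        ∀ g : G, ∃ h ∈ F, x (g - h) = true) ∧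
      ∃ Y : Set (G → Bool),
        Y ⊆ closure (Set.range fun g : G => shift g (indB A)) ∧
        IsClosed Y ∧ Y.Nonempty ∧ (∀ g : G, shift g '' Y = Y) ∧
        (∀ Z ⊆ Y, IsClosed Z → Z.Nonempty → (∀ g : G, shift g '' Z = Z) → Z = Y) ∧
        Y ≠ {fun _ => false} := by
  set X : Set (G → Bool) := Set.range fun g : G => shift g (indB A) with hXdef
  set C : G → Set (G → Bool) := fun g => {x | ∃ h ∈ F, x (g - h) = true} with hCdef
  have hCclosed : ∀ g, IsClosed (C g) := by
    intro g
    have : C g = ⋃ h ∈ F, {x : G → Bool | x (g - h) = true} := by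
      ext x; simp [hCdef]
    rw [this]
    refine Set.Finite.isClosed_biUnion F.finite_toSet fun h _ => ?_
    have heq : {x : G → Bool | x (g - h) = true}
        = (fun p : G → Bool => p (g - h)) ⁻¹' {true} := by ext p; simp
    rw [heq]
    exact (isClosed_discrete ({true} : Set Bool)).preimage (continuous_apply (g - h))
  have key : ∀ u : Finset G, (closure X ∩ ⋂ g ∈ u, C g).Nonempty := by
    intro u
    obtain ⟨s, hs⟩ := hthick u
    refine ⟨shift s (indB A), subset_closure ⟨s, rfl⟩, ?_⟩
    simp only [Set.mem_iInter]
    intro g hg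
    obtain ⟨a, ha, f, hf, hgs⟩ := hs g hg
    refine ⟨f, hf, ?_⟩
    have hgf : g - f + s = a := by
      rw [sub_add_eq_add_sub, hgs, add_sub_cancel_right]
    simp [shift, indB, hgf, ha]
  have hcompX : IsCompact (closure X) := isClosed_closure.isCompact
  obtain ⟨x, hxcl, hxC⟩ := hcompX.inter_iInter_nonempty C hCclosed key
  have hxC' : ∀ g : G, ∃ h ∈ F, x (g - h) = true := fun g => Set.mem_iInter.1 hxC g
  refine ⟨⟨x, hxcl, hxC'⟩, ?_⟩
  -- the ambient compact invariant set
  set K : Set (G → Bool) := closure X ∩ ⋂ g, C g with hKdef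
  have hKclosed : IsClosed K := isClosed_closure.inter (isClosed_iInter hCclosed)
  have hKcomp : IsCompact K := hKclosed.isCompact
  have hXinv : ∀ t : G, shift t '' X ⊆ X := by
    rintro t _ ⟨_, ⟨g, rfl⟩, rfl⟩
    exact ⟨g + t, (shift_shift t g (indB A)).symm⟩
  have hKinv : ∀ t : G, shift t '' K ⊆ K := by
    rintro t _ ⟨y, ⟨hy1, hy2⟩, rfl⟩
    constructor
    · have hsub : shift t '' closure X ⊆ closure X :=
        (image_closure_subset_closure_image (shift_cont t)).trans (closure_mono (hXinv t))
      exact hsub ⟨y, hy1, rfl⟩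
    · refine Set.mem_iInter.2 fun g => ?_
      obtain ⟨h, hh, hgt⟩ := Set.mem_iInter.1 hy2 (g + t)
      refine ⟨h, hh, ?_⟩
      have : g - h + t = g + t - h := by abel
      simpa [shift, this] using hgt
  set S : Set (Set (G → Bool)) :=
    {Y | Y ⊆ K ∧ IsClosed Y ∧ Y.Nonempty ∧ ∀ t : G, shift t '' Y ⊆ Y} with hSdef
  have hKS : K ∈ S := ⟨le_refl _, hKclosed, ⟨x, hxcl, hxC⟩, hKinv⟩
  have hchain : ∀ c ⊆ S, IsChain (· ⊆ ·) c → c.Nonempty → ∃ lb ∈ S, ∀ s ∈ c, lb ⊆ s := by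
    intro c hcS hchain hcne
    refine ⟨⋂₀ c, ⟨?_, ?_, ?_, ?_⟩, fun s hs => Set.sInter_subset_of_mem hs⟩
    · obtain ⟨s, hs⟩ := hcne
      exact (Set.sInter_subset_of_mem hs).trans (hcS hs).1
    · exact isClosed_sInter fun s hs => (hcS hs).2.1
    · have : Nonempty c := hcne.to_subtype
      refine IsCompact.nonempty_sInter_of_directed_nonempty_isCompact_isClosed
        ?_ (fun U hU => (hcS hU).2.2.1) (fun U hU => (hcS hU).2.1.isCompact)
        (fun U hU => (hcS hU).2.1)
      intro a ha b hb
      rcases hchain.total ha hb with h | h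
      · exact ⟨a, ha, le_refl _, h⟩
      · exact ⟨b, hb, h, le_refl _⟩
    · intro t
      refine Set.subset_sInter fun s hs => ?_
      refine (Set.image_mono (Set.sInter_subset_of_mem hs)).trans ((hcS hs).2.2.2 t)
  obtain ⟨Y, hYK, hYmin⟩ := zorn_superset_nonempty S hchain K hKS
  obtain ⟨hYsubK, hYclosed, hYne, hYinv⟩ := hYmin.prop
  have hYinv' : ∀ t : G, shift t '' Y = Y := by
    intro t
    refine le_antisymm (hYinv t) fun y hy => ?_
    have : shift (-t) y ∈ Y := hYinv (-t) ⟨y, hy, rfl⟩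
    exact ⟨shift (-t) y, this, shift_neg_shift t y⟩
  refine ⟨Y, hYsubK.trans Set.inter_subset_left, hYclosed, hYne, hYinv', ?_, ?_⟩
  · intro Z hZY hZc hZne hZinv
    exact hYmin.eq_of_subset ⟨hZY.trans hYsubK, hZc, hZne, fun t => (hZinv t).le⟩ hZY
  · intro hY0
    obtain ⟨y, hy⟩ := hYne
    have hyK : y ∈ K := hYsubK hy
    obtain ⟨h, hh, hval⟩ := Set.mem_iInter.1 hyK.2 (0 : G)
    rw [hY0] at hy
    simp only [Set.mem_singleton_iff] at hy
    rw [hy] at hval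
    simp at hval
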